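/- Under the NPSEM with treatment decomposition for the DAG A → A', A → A'', A' → M, A'' → Y, M → Y: if {Y(a'', m) : a'', m}, {M(a') : a'}, and A are mutually independent, consistency holds, and positivity holds, then E[Y(A' = a', A'' = a'')] = Σ_m E[Y | A = a'', M = m] · P(M = m | A = a'), where the observed data satisfy A' = A'' = A. -/

import Mathlib

open MeasureTheory ProbabilityTheory

/-- Index type for the family of counterfactuals `{Y(a'',m)} ∪ {M(a')} ∪ {A}`. -/
def MedIndex (𝓜 : Type) : Type := (Bool × 𝓜) ⊕ Bool ⊕ Unit

/-- Codomain of each member of the counterfactual family. -/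
def MedCodomain (𝓜 : Type) : MedIndex 𝓜 → Type
  | Sum.inl _ => ℝ
  | Sum.inr (Sum.inl _) => 𝓜
  | Sum.inr (Sum.inr _) => Bool

/-- The family of counterfactual random variables. -/
def medFamily {Ω : Type*} {𝓜 : Type} (Y : Bool → 𝓜 → Ω → ℝ) (M : Bool → Ω → 𝓜)
    (A : Ω → Bool) : ∀ i : MedIndex 𝓜, Ω → MedCodomain 𝓜 i
  | Sum.inl am => Y am.1 am.2
  | Sum.inr (Sum.inl a) => M a
  | Sum.inr (Sum.inr _) => A

/-- The measurable-space structure on each codomain. -/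
def medMS (𝓜 : Type) [m𝓜 : MeasurableSpace 𝓜] :
    ∀ i : MedIndex 𝓜, MeasurableSpace (MedCodomain 𝓜 i)
  | Sum.inl _ => inferInstanceAs (MeasurableSpace ℝ)
  | Sum.inr (Sum.inl _) => m𝓜
  | Sum.inr (Sum.inr _) => inferInstanceAs (MeasurableSpace Bool)

/-- If `X` is independent of `Z`, the integral of `X` over `Z ⁻¹' t` factors. -/
lemma aux_indep_setIntegral {Ω : Type*} [MeasurableSpace Ω] {μ : Measure Ω}
    [IsProbabilityMeasure μ] {β : Type*} [MeasurableSpace β] {X : Ω → ℝ} {Z : Ω → β}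
    (h : IndepFun X Z μ) (hX : Integrable X μ) (hZ : Measurable Z) {t : Set β}
    (ht : MeasurableSet t) :
    ∫ ω in Z ⁻¹' t, X ω ∂μ = (∫ ω, X ω ∂μ) * (μ (Z ⁻¹' t)).toReal := by
  have hg : Measurable (t.indicator (1 : β → ℝ)) := measurable_one.indicator ht
  have h2 : IndepFun X (fun ω => t.indicator (1 : β → ℝ) (Z ω)) μ :=
    h.comp measurable_id hg
  have heq : (fun ω => t.indicator (1 : β → ℝ) (Z ω)) = (Z ⁻¹' t).indicator (1 : Ω → ℝ) := by
    funext ω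
    by_cases hω : Z ω ∈ t <;> simp [Set.indicator_apply, hω]
  have hInt2 : Integrable (fun ω => t.indicator (1 : β → ℝ) (Z ω)) μ := by
    rw [heq]; exact (integrable_const (1 : ℝ)).indicator (hZ ht)
  have hmul := h2.integral_mul_eq_mul_integral hX.1 hInt2.1
  have hprod : (X * fun ω => t.indicator (1 : β → ℝ) (Z ω)) = (Z ⁻¹' t).indicator X := by
    funext ω
    by_cases hω : Z ω ∈ t <;>
      simp [Set.indicator_apply, hω, Set.mem_preimage]
  rw [hprod] at hmul
  rw [← integral_indicator (hZ ht), hmul, heq, integral_indicator_one (hZ ht), measureReal_def]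

/-- Under the NPSEM with treatment decomposition for the DAG
`A → A', A → A'', A' → M, A'' → Y, M → Y`, with the counterfactuals
`{Y(a'',m)}`, `{M(a')}` and `A` mutually independent, consistency, and positivity,
`E[Y(A'=a', A''=a'')] = Σ_m E[Y | A=a'', M=m] · P(M=m | A=a')`, where
`Y(a',a'') = Y(a'', M(a'))` and in the observed data `A' = A'' = A`. -/
theorem split_treatment_mediation_formula
    {Ω : Type*} [MeasurableSpace Ω] (μ : Measure Ω) [IsProbabilityMeasure μ]
    {𝓜 : Type} [Fintype 𝓜] [MeasurableSpace 𝓜] [MeasurableSingletonClass 𝓜]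
    (Y : Bool → 𝓜 → Ω → ℝ) (M : Bool → Ω → 𝓜) (A : Ω → Bool)
    (hmY : ∀ a m, Measurable (Y a m)) (hmM : ∀ a, Measurable (M a)) (hmA : Measurable A)
    (hint : ∀ a m, Integrable (Y a m) μ)
    (hint' : ∀ a a' : Bool, Integrable (fun ω => Y a (M a' ω) ω) μ)
    (hindep : iIndepFun (m := medMS 𝓜) (medFamily Y M A) μ)
    (Mobs : Ω → 𝓜) (Yobs : Ω → ℝ)
    (hMcons : ∀ ω, Mobs ω = M (A ω) ω)
    (hYcons : ∀ ω, Yobs ω = Y (A ω) (Mobs ω) ω)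
    (hpos : ∀ (a : Bool) (m : 𝓜), 0 < μ {ω | A ω = a ∧ Mobs ω = m})
    (a' a'' : Bool) :
    (∫ ω, Y a'' (M a' ω) ω ∂μ) =
      ∑ m : 𝓜,
        (∫ ω, Yobs ω ∂(μ[|{ω | A ω = a'' ∧ Mobs ω = m}])) *
        (μ[|{ω | A ω = a'}] {ω | Mobs ω = m}).toReal := by
  classical
  -- measurability of the family
  have hmeasfam : ∀ i, @Measurable _ _ _ (medMS 𝓜 i) (medFamily Y M A i) := by
    rintro (⟨a, m⟩ | a | ⟨⟩)
    · exact hmY a m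
    · exact hmM a
    · exact hmA
  -- the pairing map
  set Z : Ω → Bool × 𝓜 := fun ω => (A ω, M a'' ω) with hZdef
  have hZmeas : Measurable Z := hmA.prodMk (hmM a'')
  -- independences
  have hYM : ∀ m : 𝓜, IndepFun (Y a'' m) (M a') μ := fun m =>
    hindep.indepFun (i := Sum.inl (a'', m)) (j := Sum.inr (Sum.inl a')) (fun h => by injection h)
  have hne : ∀ (i j : Bool ⊕ Unit), i ≠ j → (Sum.inr i : MedIndex 𝓜) ≠ Sum.inr j := by
    intro i j hij h
    exact hij (by injection h)
  have hne2 : ∀ (p : Bool × 𝓜) (i : Bool ⊕ Unit), (Sum.inr i : MedIndex 𝓜) ≠ Sum.inl p := by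
    intro p i h
    injection h
  have hYZ : ∀ m : 𝓜, IndepFun (Y a'' m) Z μ := fun m =>
    IndepFun.symm (hindep.indepFun_prodMk hmeasfam (Sum.inr (Sum.inr ()))
      (Sum.inr (Sum.inl a'')) (Sum.inl (a'', m)) (hne2 _ _) (hne2 _ _))
  have hAM : IndepFun A (M a') μ :=
    hindep.indepFun (i := Sum.inr (Sum.inr ())) (j := Sum.inr (Sum.inl a')) (hne _ _ (fun h => by injection h))
  -- sets
  have hsetA : ∀ a : Bool, MeasurableSet {ω | A ω = a} := fun a =>
    hmA (measurableSet_singleton a)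
  have hsetM : ∀ m : 𝓜, MeasurableSet ((M a') ⁻¹' {m}) := fun m =>
    hmM a' (measurableSet_singleton m)
  -- the conditioning sets as preimages
  have hsetEq : ∀ m : 𝓜, {ω | A ω = a'' ∧ Mobs ω = m} = Z ⁻¹' {(a'', m)} := by
    intro m
    ext ω
    simp only [Set.mem_setOf_eq, Set.mem_preimage, Set.mem_singleton_iff, hZdef,
      Prod.mk.injEq]
    constructor
    · rintro ⟨h1, h2⟩; exact ⟨h1, by rw [← h2, hMcons, h1]⟩
    · rintro ⟨h1, h2⟩; exact ⟨h1, by rw [hMcons, h1, h2]⟩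
  -- positivity consequences
  have hposA : 0 < μ {ω | A ω = a'} := by
    have hΩ : Nonempty Ω := by
      by_contra h
      rw [not_nonempty_iff] at h
      have : μ Set.univ = 0 := by simp [Set.univ_eq_empty_iff.2 h]
      simp [measure_univ] at this
    have h𝓜 : Nonempty 𝓜 := ⟨M true (Classical.arbitrary Ω)⟩
    obtain ⟨m⟩ := h𝓜
    refine lt_of_lt_of_le (hpos a' m) (measure_mono ?_)
    intro ω hω; exact hω.1
  have hfin : ∀ s : Set Ω, μ s ≠ ⊤ := fun s => measure_ne_top μ s
  -- each summand on the RHS equals E[Y a'' m] * μ(M a' = m)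
  have hRHS : ∀ m : 𝓜,
      (∫ ω, Yobs ω ∂(μ[|{ω | A ω = a'' ∧ Mobs ω = m}])) *
        (μ[|{ω | A ω = a'}] {ω | Mobs ω = m}).toReal =
      (∫ ω, Y a'' m ω ∂μ) * (μ ((M a') ⁻¹' {m})).toReal := by
    intro m
    set s : Set Ω := {ω | A ω = a'' ∧ Mobs ω = m} with hs
    have hsmeas : MeasurableSet s := by
      rw [hs, hsetEq m]; exact hZmeas (measurableSet_singleton _)
    have hspos : 0 < μ s := hpos a'' m
    -- conditional expectation part
    have hYobs_eq : ∀ ω ∈ s, Yobs ω = Y a'' m ω := by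
      intro ω hω
      obtain ⟨h1, h2⟩ := hω
      rw [hYcons, h1, h2]
    have hcondint : ∫ ω, Yobs ω ∂(μ[|s]) = ∫ ω, Y a'' m ω ∂μ := by
      rw [ProbabilityTheory.cond, integral_smul_measure]
      have h1 : ∫ ω in s, Yobs ω ∂μ = ∫ ω in s, Y a'' m ω ∂μ :=
        setIntegral_congr_fun hsmeas hYobs_eq
      have h2 : ∫ ω in s, Y a'' m ω ∂μ = (∫ ω, Y a'' m ω ∂μ) * (μ s).toReal := by
        rw [hs, hsetEq m]
        exact aux_indep_setIntegral (hYZ m) (hint a'' m) hZmeas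
          (measurableSet_singleton _)
      rw [h1, h2, ENNReal.toReal_inv, smul_eq_mul]
      field_simp [ENNReal.toReal_ne_zero.2 ⟨hspos.ne', hfin s⟩]
    -- conditional probability part
    have hcondprob : μ[|{ω | A ω = a'}] {ω | Mobs ω = m} = μ ((M a') ⁻¹' {m}) := by
      rw [cond_apply (hsetA a')]
      have hinter : {ω | A ω = a'} ∩ {ω | Mobs ω = m} =
          A ⁻¹' {a'} ∩ (M a') ⁻¹' {m} := by
        ext ω
        simp only [Set.mem_inter_iff, Set.mem_setOf_eq, Set.mem_preimage,
          Set.mem_singleton_iff]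
        constructor
        · rintro ⟨h1, h2⟩; exact ⟨h1, by rw [← h2, hMcons, h1]⟩
        · rintro ⟨h1, h2⟩; exact ⟨h1, by rw [hMcons, h1, h2]⟩
      rw [hinter, hAM.measure_inter_preimage_eq_mul _ _ (measurableSet_singleton a')
        (measurableSet_singleton m)]
      have hApre : A ⁻¹' {a'} = {ω | A ω = a'} := rfl
      rw [hApre, ← mul_assoc, ENNReal.inv_mul_cancel hposA.ne' (hfin _), one_mul]
    rw [hcondint, hcondprob]
  -- decompose the LHS
  have hLHS : (∫ ω, Y a'' (M a' ω) ω ∂μ) =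
      ∑ m : 𝓜, (∫ ω, Y a'' m ω ∂μ) * (μ ((M a') ⁻¹' {m})).toReal := by
    have hdecomp : (fun ω => Y a'' (M a' ω) ω) =
        fun ω => ∑ m : 𝓜, ((M a') ⁻¹' {m}).indicator (Y a'' m) ω := by
      funext ω
      have hind : ∀ m : 𝓜, ((M a') ⁻¹' {m}).indicator (Y a'' m) ω =
          if M a' ω = m then Y a'' m ω else 0 := fun m => by
        simp [Set.indicator_apply]
      simp only [hind]
      rw [Finset.sum_ite_eq Finset.univ (M a' ω) (fun m => Y a'' m ω)]
      simp
    rw [hdecomp, integral_finset_sum]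
    · refine Finset.sum_congr rfl (fun m _ => ?_)
      rw [integral_indicator (hsetM m)]
      exact aux_indep_setIntegral (hYM m) (hint a'' m) (hmM a') (measurableSet_singleton m)
    · exact fun m _ => (hint a'' m).indicator (hsetM m)
  rw [hLHS]
  exact (Finset.sum_congr rfl (fun m _ => (hRHS m))).symm
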